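/- Let q, r be differentiable on ℝ with q nonvanishing, q' = -r q and r' = r² - t - 2q², and let χ, μ, ν be differentiable with 3χ' = -2rμ - ν, 3μ' = -2rχ, 3ν' = -2(r'μ + (r²−t)χ). Define μ₊ = μ + χ, μ₋ = μ − χ, g = q², and u = (q')² − t q² − q⁴. Then: 3 g μ₊' = g' μ₊ − g ν, 3 g μ₋' = −g' μ₋ + g ν, and 3 g ν' = 2 g² μ₋ − 2 u μ₊. -/

import Mathlib

/-- The linear system (3.24)–(3.26) in the variables `χ, μ, ν` transforms into
the system (1.15)–(1.17) for `μ₊ = μ + χ`, `μ₋ = μ - χ`, with `g = q²` and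
`u = (q')² - tq² - q⁴`. -/
theorem stmt_11 (q r χ μ ν : ℝ → ℝ)
    (hqne : ∀ t, q t ≠ 0)
    (hqd : Differentiable ℝ q) (hrd : Differentiable ℝ r)
    (hχd : Differentiable ℝ χ) (hμd : Differentiable ℝ μ) (hνd : Differentiable ℝ ν)
    (hq : ∀ t, deriv q t = -(r t) * q t)
    (hr : ∀ t, deriv r t = r t ^ 2 - t - 2 * q t ^ 2)
    (hχ : ∀ t, 3 * deriv χ t = -2 * r t * μ t - ν t)
    (hμ : ∀ t, 3 * deriv μ t = -2 * r t * χ t)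
    (hν : ∀ t, 3 * deriv ν t = -2 * (deriv r t * μ t + (r t ^ 2 - t) * χ t)) :
    ∀ t,
      3 * q t ^ 2 * deriv (fun s => μ s + χ s) t
        = deriv (fun s => q s ^ 2) t * (μ t + χ t) - q t ^ 2 * ν t
      ∧ 3 * q t ^ 2 * deriv (fun s => μ s - χ s) t
        = -(deriv (fun s => q s ^ 2) t) * (μ t - χ t) + q t ^ 2 * ν t
      ∧ 3 * q t ^ 2 * deriv ν t
        = 2 * (q t ^ 2) ^ 2 * (μ t - χ t)
          - 2 * ((deriv q t) ^ 2 - t * q t ^ 2 - q t ^ 4) * (μ t + χ t) := by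
  intro t
  have h1 : deriv (fun s => μ s + χ s) t = deriv μ t + deriv χ t :=
    deriv_add (hμd t) (hχd t)
  have h2 : deriv (fun s => μ s - χ s) t = deriv μ t - deriv χ t :=
    deriv_sub (hμd t) (hχd t)
  have h3 : deriv (fun s => q s ^ 2) t = 2 * q t * deriv q t := by
    rw [deriv_fun_pow (hqd t) _]; ring
  refine ⟨?_, ?_, ?_⟩
  · rw [h1, h3, hq t]
    linear_combination q t ^ 2 * (hμ t) + q t ^ 2 * (hχ t)
  · rw [h2, h3, hq t]
    linear_combination q t ^ 2 * (hμ t) - q t ^ 2 * (hχ t)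
  · rw [hq t]
    linear_combination q t ^ 2 * (hν t) - 2 * q t ^ 2 * μ t * (hr t)
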